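/- There is no voting method F whose domain is the set of all profiles with two or three alternatives that satisfies anonymity, neutrality, positive responsiveness, and immunity to spoilers. -/

import Mathlib

/-!
Formalization of notions from "An extension of May's Theorem to three
alternatives: axiomatizing Minimax voting" by Holliday and Pacuit.

The set of voters is the countably infinite set `ℕ`; the set `α` of
alternatives is a type (assumed to have at least three elements where the
paper assumes `|𝒳| ≥ 3`).
-/

namespace MayMinimax

/-- A profile: a finite set of voters drawn from the countably infinite set `ℕ`
of all voters, a finite set of alternatives, and, for each voter, a binary
relation on alternatives given as a Boolean-valued function:
`P.rel i a b = true` means that voter `i` ranks `a` above `b`. -/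
structure Profile (α : Type*) where
  voters : Finset ℕ
  alts : Finset α
  rel : ℕ → α → α → Bool

variable {α : Type*} [DecidableEq α]

/-- Each voter's ballot is a strict weak order (asymmetric and negatively
transitive) on the alternatives. -/
def IsSWO (P : Profile α) : Prop :=
  ∀ i ∈ P.voters,
    (∀ a ∈ P.alts, ∀ b ∈ P.alts, P.rel i a b = true → P.rel i b a = false) ∧
    (∀ a ∈ P.alts, ∀ b ∈ P.alts, ∀ c ∈ P.alts,
      P.rel i a b = false → P.rel i b c = false → P.rel i a c = false)

/-- The margin of `a` over `b` in `P`: the number of voters ranking `a` above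
`b` minus the number of voters ranking `b` above `a`. -/
def Margin (P : Profile α) (a b : α) : ℤ :=
  ((P.voters.filter fun i => P.rel i a b = true).card : ℤ) -
    ((P.voters.filter fun i => P.rel i b a = true).card : ℤ)

/-- The number of voters ranking `a` above `b` in `P`. -/
def Support (P : Profile α) (a b : α) : ℕ :=
  (P.voters.filter fun i => P.rel i a b = true).card

/-- The Minimax score of `a`: the maximum margin of any other alternative over `a`. -/
def MMScore (P : Profile α) (a : α) : ℤ :=
  (((P.alts.erase a).image fun b => Margin P b a).max).unbotD 0

/-- The set of Minimax winners: alternatives with minimal Minimax score. -/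
def Minimax (P : Profile α) : Finset α :=
  P.alts.filter fun a => ∀ b ∈ P.alts, MMScore P a ≤ MMScore P b

/-- Restriction of a profile to a subset `Y` of the alternatives. -/
def Profile.restrict (P : Profile α) (Y : Finset α) : Profile α where
  voters := P.voters
  alts := Y
  rel := fun i a b => P.rel i a b && decide (a ∈ Y) && decide (b ∈ Y)

/-- `P.minus b` is `P` restricted to `X(P) \ {b}`. -/
def Profile.minus (P : Profile α) (b : α) : Profile α :=
  P.restrict (P.alts.erase b)

/-- The combination `P + Q` of two profiles (used with disjoint voter sets and
the same set of alternatives). -/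
def Profile.combine (P Q : Profile α) : Profile α where
  voters := P.voters ∪ Q.voters
  alts := P.alts
  rel := fun i a b => if i ∈ P.voters then P.rel i a b else Q.rel i a b

/-- `2P`: the profile `P` together with a copy of `P` on a disjoint set of voters. -/
def Profile.double (P : Profile α) : Profile α where
  voters := P.voters ∪ P.voters.image fun i => i + (P.voters.sup id + 1)
  alts := P.alts
  rel := fun i a b =>
    if i ∈ P.voters then P.rel i a b else P.rel (i - (P.voters.sup id + 1)) a b

/-- `r` is (the strict part of) a linear order on the finite set `X`. -/
def IsLinearOn (r : α → α → Bool) (X : Finset α) : Prop :=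
  (∀ a ∈ X, r a a = false) ∧
  (∀ a ∈ X, ∀ b ∈ X, ∀ c ∈ X, r a b = true → r b c = true → r a c = true) ∧
  (∀ a ∈ X, ∀ b ∈ X, a ≠ b → (r a b = true ∨ r b a = true)) ∧
  (∀ a ∈ X, ∀ b ∈ X, r a b = true → r b a = false)

/-- `Q` is a block profile for the set `X` of alternatives: it contains, for
each linear order of `X`, exactly one voter submitting that linear order, and
no other voters. -/
def IsBlock (X : Finset α) (Q : Profile α) : Prop :=
  Q.alts = X ∧
  (∀ i ∈ Q.voters, IsLinearOn (Q.rel i) X) ∧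
  (∀ r : α → α → Bool, IsLinearOn r X →
    ∃! i, i ∈ Q.voters ∧ ∀ a ∈ X, ∀ b ∈ X, Q.rel i a b = r a b)

/-- `P'` is obtained from `P` by one voter who ranked `a` uniquely last in `P`
switching to ranking `a` uniquely first in `P'`, with the restriction of that
voter's relation to `X(P) \ {a}` unchanged and all other voters' relations
unchanged. -/
def MoveLastToFirst (P P' : Profile α) (a : α) : Prop :=
  P'.voters = P.voters ∧ P'.alts = P.alts ∧ a ∈ P.alts ∧
  ∃ i ∈ P.voters,
    (∀ b ∈ P.alts, b ≠ a → P.rel i b a = true) ∧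
    (∀ b ∈ P.alts, b ≠ a → P'.rel i a b = true) ∧
    (∀ b ∈ P.alts, b ≠ a → ∀ c ∈ P.alts, c ≠ a → P'.rel i b c = P.rel i b c) ∧
    (∀ j ∈ P.voters, j ≠ i → ∀ x ∈ P.alts, ∀ y ∈ P.alts, P'.rel j x y = P.rel j x y)

/-- `P'` is obtained from `P` by adding one new voter who ranks `a` uniquely
first, all old voters' relations being unchanged. -/
def AddTopVoter (P P' : Profile α) (a : α) : Prop :=
  P'.alts = P.alts ∧
  ∃ j, j ∉ P.voters ∧ P'.voters = insert j P.voters ∧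
    (∀ b ∈ P.alts, b ≠ a → P'.rel j a b = true) ∧
    (∀ i ∈ P.voters, ∀ x ∈ P.alts, ∀ y ∈ P.alts, P'.rel i x y = P.rel i x y)

/-- `P'` is obtained from `P` by one voter improving the position of `a` in
their ballot, while nothing else changes. -/
def ImproveFor (P P' : Profile α) (a : α) : Prop :=
  P'.voters = P.voters ∧ P'.alts = P.alts ∧
  ∃ i ∈ P.voters,
    (∃ b ∈ P.alts, b ≠ a ∧
      ((P.rel i a b = false ∧ P'.rel i a b = true) ∨
        (P.rel i b a = true ∧ P'.rel i b a = false))) ∧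
    (∀ c ∈ P.alts, c ≠ a →
      (P.rel i a c = true → P'.rel i a c = true) ∧
      (P.rel i c a = false → P'.rel i c a = false)) ∧
    (∀ c ∈ P.alts, c ≠ a → ∀ d ∈ P.alts, d ≠ a → P'.rel i c d = P.rel i c d) ∧
    (∀ j ∈ P.voters, j ≠ i → ∀ x ∈ P.alts, ∀ y ∈ P.alts, P'.rel j x y = P.rel j x y)

/-- Anonymity relative to a domain `D` of profiles. -/
def Anonymity (D : Set (Profile α)) (F : Profile α → Finset α) : Prop :=
  ∀ P ∈ D, ∀ P' ∈ D, P.alts = P'.alts →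
    (∃ π : Equiv.Perm ℕ, P.voters.image π = P'.voters ∧
      ∀ i ∈ P.voters, ∀ a ∈ P.alts, ∀ b ∈ P.alts, P.rel i a b = P'.rel (π i) a b) →
    F P = F P'

/-- Neutrality relative to a domain `D` of profiles. -/
def Neutrality (D : Set (Profile α)) (F : Profile α → Finset α) : Prop :=
  ∀ P ∈ D, ∀ P' ∈ D, P.voters = P'.voters →
    ∀ τ : Equiv.Perm α, P.alts.image τ = P'.alts →
      (∀ i ∈ P.voters, ∀ a ∈ P.alts, ∀ b ∈ P.alts, P.rel i a b = P'.rel i (τ a) (τ b)) →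
      (F P).image τ = F P'

/-- Weak positive responsiveness relative to a domain `D` of profiles. -/
def WeakPositiveResponsiveness (D : Set (Profile α)) (F : Profile α → Finset α) : Prop :=
  ∀ P ∈ D, ∀ P' ∈ D, ∀ a ∈ F P, MoveLastToFirst P P' a → F P' = {a}

/-- (Full) positive responsiveness relative to a domain `D` of profiles. -/
def PositiveResponsiveness (D : Set (Profile α)) (F : Profile α → Finset α) : Prop :=
  ∀ P ∈ D, ∀ P' ∈ D, ∀ a ∈ F P, ImproveFor P P' a → F P' = {a}

/-- Positive involvement relative to a domain `D` of profiles. -/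
def PositiveInvolvement (D : Set (Profile α)) (F : Profile α → Finset α) : Prop :=
  ∀ P ∈ D, ∀ P' ∈ D, ∀ a ∈ F P, AddTopVoter P P' a → a ∈ F P'

/-- Near immunity to spoilers relative to a domain `D` of profiles. -/
def NearImmunityToSpoilers (D : Set (Profile α)) (F : Profile α → Finset α) : Prop :=
  ∀ P ∈ D, ∀ a ∈ P.alts, ∀ b ∈ P.alts,
    P.minus b ∈ D → P.restrict {a, b} ∈ D →
    F (P.minus b) = {a} → F (P.restrict {a, b}) = {a} → b ∉ F P → a ∈ F P

/-- Immunity to spoilers relative to a domain `D` of profiles. -/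
def ImmunityToSpoilers (D : Set (Profile α)) (F : Profile α → Finset α) : Prop :=
  ∀ P ∈ D, ∀ a ∈ P.alts, ∀ b ∈ P.alts,
    P.minus b ∈ D → P.restrict {a, b} ∈ D →
    a ∈ F (P.minus b) → F (P.restrict {a, b}) = {a} → b ∉ F P → a ∈ F P

/-- (Inclusion) homogeneity relative to a domain `D` of profiles. -/
def Homogeneity (D : Set (Profile α)) (F : Profile α → Finset α) : Prop :=
  ∀ P ∈ D, P.double ∈ D ∧ F P ⊆ F P.double

/-- Block preservation relative to a domain `D` of profiles. -/
def BlockPreservation (D : Set (Profile α)) (F : Profile α → Finset α) : Prop :=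
  ∀ P ∈ D, ∀ Q ∈ D, Disjoint P.voters Q.voters → IsBlock P.alts Q →
    P.combine Q ∈ D ∧ F P ⊆ F (P.combine Q)

/-- Condorcet consistency relative to a domain `D` of profiles. -/
def CondorcetConsistent (D : Set (Profile α)) (F : Profile α → Finset α) : Prop :=
  ∀ P ∈ D, ∀ c ∈ P.alts, (∀ x ∈ P.alts, x ≠ c → 0 < Margin P c x) → F P = {c}

/-- The domain of all (strict-weak-order) profiles with exactly two alternatives. -/
def Dom2 (α : Type*) : Set (Profile α) :=
  {P | IsSWO P ∧ P.voters.Nonempty ∧ P.alts.card = 2}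

/-- The domain of all profiles with two or three alternatives. -/
def Dom23 (α : Type*) : Set (Profile α) :=
  {P | IsSWO P ∧ P.voters.Nonempty ∧ (P.alts.card = 2 ∨ P.alts.card = 3)}

/-- The domain of all profiles with at least two alternatives. -/
def DomGe2 (α : Type*) : Set (Profile α) :=
  {P | IsSWO P ∧ P.voters.Nonempty ∧ 2 ≤ P.alts.card}

/-- The domain of all profiles. -/
def DomAll (α : Type*) : Set (Profile α) :=
  {P | IsSWO P ∧ P.voters.Nonempty ∧ P.alts.Nonempty}

/-- The support-based Minimax score of `a`: the maximum of `Support P b a`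
over all `b` with a positive margin over `a` (`0` if there is no such `b`). -/
def SupportMMScore (P : Profile α) (a : α) : ℕ :=
  ((((P.alts.erase a).filter fun b => 0 < Margin P b a).image fun b =>
    Support P b a).max).unbotD 0

/-- Support-based Minimax: alternatives with minimal support-based Minimax score. -/
def SupportMinimax (P : Profile α) : Finset α :=
  P.alts.filter fun a => ∀ b ∈ P.alts, SupportMMScore P a ≤ SupportMMScore P b

/-- The set of weak Condorcet winners in `P`. -/
def WeakCondorcetWinners (P : Profile α) : Finset α :=
  P.alts.filter fun a => ∀ x ∈ P.alts, 0 ≤ Margin P a x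

/-- The plurality score of `a`: the number of voters ranking `a` uniquely first. -/
def PluralityScore (P : Profile α) (a : α) : ℕ :=
  (P.voters.filter fun i => ∀ b ∈ P.alts, b ≠ a → P.rel i a b = true).card

/-- The Condorcet-Plurality voting method: the weak Condorcet winners if there
are any; otherwise the alternatives with maximal plurality score. -/
def CP (P : Profile α) : Finset α :=
  if (WeakCondorcetWinners P).Nonempty then WeakCondorcetWinners P
  else P.alts.filter fun a => ∀ b ∈ P.alts, PluralityScore P b ≤ PluralityScore P a

/-- The marginal Borda score of `a`: the sum of the margins of `a` over the
alternatives. -/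
def MarginalBorda (P : Profile α) (a : α) : ℤ :=
  ∑ b ∈ P.alts, Margin P a b

/-- Minimax MB: the Minimax winners with greatest marginal Borda score. -/
def MinimaxMB (P : Profile α) : Finset α :=
  (Minimax P).filter fun a => ∀ b ∈ Minimax P, MarginalBorda P b ≤ MarginalBorda P a

/-- `P` and `P'` have the same ordinal margin graph. -/
def SameOrdinalMarginGraph (P P' : Profile α) : Prop :=
  P.alts = P'.alts ∧
  (∀ a ∈ P.alts, ∀ b ∈ P.alts, (0 < Margin P a b ↔ 0 < Margin P' a b)) ∧
  (∀ a ∈ P.alts, ∀ b ∈ P.alts, ∀ c ∈ P.alts, ∀ d ∈ P.alts,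
    (Margin P c d ≤ Margin P a b ↔ Margin P' c d ≤ Margin P' a b))

/-- Ordinal margin invariance relative to a domain `D` of profiles. -/
def OrdinalMarginInvariance (D : Set (Profile α)) (F : Profile α → Finset α) : Prop :=
  ∀ P ∈ D, ∀ P' ∈ D, SameOrdinalMarginGraph P P' → F P = F P'

/-- `P` is uniquely-weighted: distinct pairs of distinct alternatives have
distinct margins. -/
def UniquelyWeighted (P : Profile α) : Prop :=
  ∀ a ∈ P.alts, ∀ b ∈ P.alts, ∀ c ∈ P.alts, ∀ d ∈ P.alts,
    a ≠ b → c ≠ d → (a, b) ≠ (c, d) → Margin P a b ≠ Margin P c d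


section Impossibility

/-- A two-voter profile given by two rank functions (lower rank = better). -/
def pf2 (X : Finset α) (r0 r1 : α → ℕ) : Profile α :=
  ⟨{0, 1}, X, fun i a b => if i = 0 then decide (r0 a < r0 b) else decide (r1 a < r1 b)⟩

/-- Rank function for the linear order `a > b > (everything else)`. -/
def rk3 (a b : α) : α → ℕ := fun u => if u = a then 0 else if u = b then 1 else 2

/-- Rank function for the weak order `a > (everything else tied)`. -/
def rk21 (a : α) : α → ℕ := fun u => if u = a then 0 else 1

/-- Rank function for the weak order with everything tied. -/
def rk0 : α → ℕ := fun _ => 0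

lemma isSWO_pf2 (X : Finset α) (r0 r1 : α → ℕ) : IsSWO (pf2 X r0 r1) := by
  intro i _
  constructor
  · intro a _ b _ h
    by_cases h0 : i = 0 <;> simp [pf2, h0] at h ⊢ <;> omega
  · intro a _ b _ c _ h1 h2
    by_cases h0 : i = 0 <;> simp [pf2, h0] at h1 h2 ⊢ <;> omega

lemma pf2_dom {X : Finset α} (hX : X.card = 2 ∨ X.card = 3) (r0 r1 : α → ℕ) :
    pf2 X r0 r1 ∈ Dom23 α :=
  ⟨isSWO_pf2 X r0 r1, ⟨0, by simp [pf2]⟩, hX⟩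

lemma isSWO_restrict {P : Profile α} {Y : Finset α} (h : IsSWO P) (hY : Y ⊆ P.alts) :
    IsSWO (P.restrict Y) := by
  intro i hi
  obtain ⟨h1, h2⟩ := h i hi
  constructor
  · intro a ha b hb hr
    simp only [Profile.restrict, Bool.and_eq_true, decide_eq_true_eq] at hr
    simp only [Profile.restrict, Bool.and_eq_false_iff]
    exact Or.inl (Or.inl (h1 a (hY ha) b (hY hb) hr.1.1))
  · intro a ha b hb c hc hr1 hr2
    simp only [Profile.restrict, Bool.and_eq_false_iff, decide_eq_false_iff_not] at hr1 hr2 ⊢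
    rcases hr1 with (h' | h') | h'
    · rcases hr2 with (h'' | h'') | h''
      · exact Or.inl (Or.inl (h2 a (hY ha) b (hY hb) c (hY hc) h' h''))
      · exact absurd hb h''
      · exact absurd hc h''
    · exact absurd ha h'
    · exact Or.inl (Or.inl (by
        rcases hr2 with (h'' | h'') | h''
        · exact absurd hb h'
        · exact absurd hb h''
        · exact absurd hc h''))

lemma restrict_dom {P : Profile α} {Y : Finset α} (hP : IsSWO P) (hv : P.voters.Nonempty)
    (hY : Y ⊆ P.alts) (hc : Y.card = 2 ∨ Y.card = 3) : P.restrict Y ∈ Dom23 α :=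
  ⟨isSWO_restrict hP hY, hv, hc⟩

lemma F_ext {F : Profile α → Finset α} (hA : Anonymity (Dom23 α) F) {P Q : Profile α}
    (hP : P ∈ Dom23 α) (hQ : Q ∈ Dom23 α) (ha : P.alts = Q.alts) (hv : P.voters = Q.voters)
    (hrel : ∀ i ∈ P.voters, ∀ a ∈ P.alts, ∀ b ∈ P.alts, P.rel i a b = Q.rel i a b) :
    F P = F Q := by
  refine hA P hP Q hQ ha ⟨Equiv.refl ℕ, ?_, ?_⟩
  · simpa using hv
  · simpa using hrel

lemma image_swap_pair {β : Type*} [DecidableEq β] (a b : β) :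
    ({a, b} : Finset β).image (Equiv.swap a b) = {a, b} := by
  rw [Finset.image_insert, Finset.image_singleton, Equiv.swap_apply_left,
    Equiv.swap_apply_right, Finset.pair_comm]

lemma invariant_pair {s : Finset α} {a b : α} (hab : a ≠ b) (hne : s.Nonempty)
    (hsub : s ⊆ {a, b}) (hinv : s.image (Equiv.swap a b) = s) : s = {a, b} := by
  have hsw : ∀ u ∈ s, Equiv.swap a b u ∈ s := fun u hu => by
    rw [← hinv]; exact Finset.mem_image_of_mem _ hu
  obtain ⟨c, hc⟩ := hne
  have hc' := hsub hc
  simp only [Finset.mem_insert, Finset.mem_singleton] at hc'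
  refine Finset.Subset.antisymm hsub (Finset.insert_subset_iff.2 ⟨?_, Finset.singleton_subset_iff.2 ?_⟩)
  · rcases hc' with rfl | rfl
    · exact hc
    · have := hsw c hc; rwa [Equiv.swap_apply_right] at this
  · rcases hc' with rfl | rfl
    · have := hsw c hc; rwa [Equiv.swap_apply_left] at this
    · exact hc

lemma pair_card {a b : α} (hab : a ≠ b) : ({a, b} : Finset α).card = 2 :=
  Finset.card_pair hab

/-- The all-ties two-voter profile on `{a, b}` selects `{a, b}`. -/
lemma F_tie {F : Profile α → Finset α} (hNE : ∀ P ∈ Dom23 α, (F P).Nonempty ∧ F P ⊆ P.alts)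
    (hN : Neutrality (Dom23 α) F) {a b : α} (hab : a ≠ b) :
    F (pf2 {a, b} rk0 rk0) = {a, b} := by
  have hdom : pf2 ({a, b} : Finset α) rk0 rk0 ∈ Dom23 α := pf2_dom (Or.inl (pair_card hab)) _ _
  have hinv := hN _ hdom _ hdom rfl (Equiv.swap a b) (image_swap_pair a b)
    (fun i _ u _ v _ => rfl)
  exact invariant_pair hab (hNE _ hdom).1 (hNE _ hdom).2 hinv

/-- Profile `(a>b, a~b)` selects `{a}`. -/
lemma F_C1 {F : Profile α → Finset α} (hNE : ∀ P ∈ Dom23 α, (F P).Nonempty ∧ F P ⊆ P.alts)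
    (hN : Neutrality (Dom23 α) F) (hPR : PositiveResponsiveness (Dom23 α) F)
    {a b : α} (hab : a ≠ b) : F (pf2 {a, b} (rk21 a) rk0) = {a} := by
  have hdomT : pf2 ({a, b} : Finset α) rk0 rk0 ∈ Dom23 α := pf2_dom (Or.inl (pair_card hab)) _ _
  have hdomC : pf2 ({a, b} : Finset α) (rk21 a) rk0 ∈ Dom23 α := pf2_dom (Or.inl (pair_card hab)) _ _
  refine hPR _ hdomT _ hdomC a ?_ ?_
  · rw [F_tie hNE hN hab]; simp
  refine ⟨rfl, rfl, 0, by simp [pf2], ⟨b, by simp [pf2], hab.symm, Or.inl ⟨by simp [pf2, rk0],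
    by simp [pf2, rk21, hab.symm]⟩⟩, ?_, ?_, ?_⟩
  · intro c hc hca
    simp only [pf2, Finset.mem_insert, Finset.mem_singleton] at hc
    rcases hc with rfl | rfl
    · exact absurd rfl hca
    · constructor
      · intro h; simp [pf2, rk0] at h
      · intro _; simp [pf2, rk21, hab.symm]
  · intro c hc hca d hd hda
    simp only [pf2, Finset.mem_insert, Finset.mem_singleton] at hc hd
    rcases hc with rfl | rfl
    · exact absurd rfl hca
    · rcases hd with rfl | rfl
      · exact absurd rfl hda
      · simp [pf2, rk21, rk0]
  · intro j hj hj0 u _ v _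
    simp only [pf2, Finset.mem_insert, Finset.mem_singleton] at hj
    rcases hj with rfl | rfl
    · exact absurd rfl hj0
    · simp [pf2]

/-- Profile `(a~b, a>b)` selects `{a}`. -/
lemma F_E1 {F : Profile α → Finset α} (hNE : ∀ P ∈ Dom23 α, (F P).Nonempty ∧ F P ⊆ P.alts)
    (hN : Neutrality (Dom23 α) F) (hPR : PositiveResponsiveness (Dom23 α) F)
    {a b : α} (hab : a ≠ b) : F (pf2 {a, b} rk0 (rk21 a)) = {a} := by
  have hdomT : pf2 ({a, b} : Finset α) rk0 rk0 ∈ Dom23 α := pf2_dom (Or.inl (pair_card hab)) _ _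
  have hdomC : pf2 ({a, b} : Finset α) rk0 (rk21 a) ∈ Dom23 α := pf2_dom (Or.inl (pair_card hab)) _ _
  refine hPR _ hdomT _ hdomC a ?_ ?_
  · rw [F_tie hNE hN hab]; simp
  refine ⟨rfl, rfl, 1, by simp [pf2], ⟨b, by simp [pf2], hab.symm, Or.inl ⟨by simp [pf2, rk0],
    by simp [pf2, rk21, hab.symm]⟩⟩, ?_, ?_, ?_⟩
  · intro c hc hca
    simp only [pf2, Finset.mem_insert, Finset.mem_singleton] at hc
    rcases hc with rfl | rfl
    · exact absurd rfl hca
    · constructor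
      · intro h; simp [pf2, rk0] at h
      · intro _; simp [pf2, rk21, hab.symm]
  · intro c hc hca d hd hda
    simp only [pf2, Finset.mem_insert, Finset.mem_singleton] at hc hd
    rcases hc with rfl | rfl
    · exact absurd rfl hca
    · rcases hd with rfl | rfl
      · exact absurd rfl hda
      · simp [pf2, rk21, rk0]
  · intro j hj hj0 u _ v _
    simp only [pf2, Finset.mem_insert, Finset.mem_singleton] at hj
    rcases hj with rfl | rfl
    · simp [pf2]
    · exact absurd rfl hj0

/-- Profile `(a>b, a>b)` selects `{a}`. -/
lemma F_C2 {F : Profile α → Finset α} (hNE : ∀ P ∈ Dom23 α, (F P).Nonempty ∧ F P ⊆ P.alts)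
    (hN : Neutrality (Dom23 α) F) (hPR : PositiveResponsiveness (Dom23 α) F)
    {a b : α} (hab : a ≠ b) : F (pf2 {a, b} (rk21 a) (rk21 a)) = {a} := by
  have hdomC : pf2 ({a, b} : Finset α) (rk21 a) rk0 ∈ Dom23 α := pf2_dom (Or.inl (pair_card hab)) _ _
  have hdomD : pf2 ({a, b} : Finset α) (rk21 a) (rk21 a) ∈ Dom23 α := pf2_dom (Or.inl (pair_card hab)) _ _
  refine hPR _ hdomC _ hdomD a ?_ ?_
  · rw [F_C1 hNE hN hPR hab]; simp
  refine ⟨rfl, rfl, 1, by simp [pf2], ⟨b, by simp [pf2], hab.symm, Or.inl ⟨by simp [pf2, rk0],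
    by simp [pf2, rk21, hab.symm]⟩⟩, ?_, ?_, ?_⟩
  · intro c hc hca
    simp only [pf2, Finset.mem_insert, Finset.mem_singleton] at hc
    rcases hc with rfl | rfl
    · exact absurd rfl hca
    · constructor
      · intro h; simp [pf2, rk0] at h
      · intro _; simp [pf2, rk21, hab.symm]
  · intro c hc hca d hd hda
    simp only [pf2, Finset.mem_insert, Finset.mem_singleton] at hc hd
    rcases hc with rfl | rfl
    · exact absurd rfl hca
    · rcases hd with rfl | rfl
      · exact absurd rfl hda
      · simp [pf2, rk21, rk0]
  · intro j hj hj0 u _ v _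
    simp only [pf2, Finset.mem_insert, Finset.mem_singleton] at hj
    rcases hj with rfl | rfl
    · simp [pf2]
    · exact absurd rfl hj0

/-- Profile `(a>b, b>a)` selects `{a, b}`. -/
lemma F_Bp {F : Profile α → Finset α} (hNE : ∀ P ∈ Dom23 α, (F P).Nonempty ∧ F P ⊆ P.alts)
    (hA : Anonymity (Dom23 α) F) (hN : Neutrality (Dom23 α) F)
    {a b : α} (hab : a ≠ b) : F (pf2 {a, b} (rk21 a) (rk21 b)) = {a, b} := by
  have hdomP : pf2 ({a, b} : Finset α) (rk21 a) (rk21 b) ∈ Dom23 α :=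
    pf2_dom (Or.inl (pair_card hab)) _ _
  have hdomQ : pf2 ({a, b} : Finset α) (rk21 b) (rk21 a) ∈ Dom23 α :=
    pf2_dom (Or.inl (pair_card hab)) _ _
  have hanon : F (pf2 ({a, b} : Finset α) (rk21 b) (rk21 a)) =
      F (pf2 ({a, b} : Finset α) (rk21 a) (rk21 b)) := by
    refine hA _ hdomQ _ hdomP rfl ⟨Equiv.swap 0 1, ?_, ?_⟩
    · rw [show (pf2 ({a, b} : Finset α) (rk21 b) (rk21 a)).voters = {0, 1} from rfl,
        Finset.image_insert, Finset.image_singleton, Equiv.swap_apply_left,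
        Equiv.swap_apply_right]
      exact Finset.pair_comm 1 0
    · intro i hi u _ v _
      simp only [pf2, Finset.mem_insert, Finset.mem_singleton] at hi
      rcases hi with rfl | rfl
      · simp [pf2, Equiv.swap_apply_left]
      · simp [pf2, Equiv.swap_apply_right]
  have hneu : (F (pf2 ({a, b} : Finset α) (rk21 a) (rk21 b))).image (Equiv.swap a b) =
      F (pf2 ({a, b} : Finset α) (rk21 b) (rk21 a)) := by
    refine hN _ hdomP _ hdomQ rfl (Equiv.swap a b) (image_swap_pair a b) ?_
    intro i hi u hu v hv
    simp only [pf2, Finset.mem_insert, Finset.mem_singleton] at hi hu hv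
    rcases hi with rfl | rfl <;> rcases hu with rfl | rfl <;> rcases hv with rfl | rfl <;>
      simp [pf2, rk21, hab, hab.symm, Equiv.swap_apply_left, Equiv.swap_apply_right]
  rw [hanon] at hneu
  exact invariant_pair hab (hNE _ hdomP).1 (hNE _ hdomP).2 hneu

end Impossibility

set_option maxHeartbeats 1000000 in
/-- There is no voting method on the domain of profiles with two or three
alternatives satisfying anonymity, neutrality, (full) positive responsiveness,
and immunity to spoilers. -/
theorem no_method_with_positive_responsiveness_and_immunity {α : Type*} [DecidableEq α]
    (hX : ∃ x y z : α, x ≠ y ∧ x ≠ z ∧ y ≠ z) :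
    ¬ ∃ F : Profile α → Finset α,
        (∀ P ∈ Dom23 α, (F P).Nonempty ∧ F P ⊆ P.alts) ∧
        Anonymity (Dom23 α) F ∧
        Neutrality (Dom23 α) F ∧
        PositiveResponsiveness (Dom23 α) F ∧
        ImmunityToSpoilers (Dom23 α) F := by
  obtain ⟨x, y, z, hxy, hxz, hyz⟩ := hX
  rintro ⟨F, hNE, hA, hN, hPR, hItS⟩
  have hyx := hxy.symm
  have hzx := hxz.symm
  have hzy := hyz.symm
  have hcard3 : ({x, y, z} : Finset α).card = 3 := by
    rw [Finset.card_insert_of_notMem (by simp [hxy, hxz]), pair_card hyz]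
  have her_y : ({x, y, z} : Finset α).erase y = {x, z} := by
    ext u
    simp only [Finset.mem_erase, Finset.mem_insert, Finset.mem_singleton]
    constructor
    · rintro ⟨hne, rfl | rfl | rfl⟩
      · exact Or.inl rfl
      · exact absurd rfl hne
      · exact Or.inr rfl
    · rintro (rfl | rfl)
      · exact ⟨hxy, Or.inl rfl⟩
      · exact ⟨hzy, Or.inr (Or.inr rfl)⟩
  have her_x : ({x, y, z} : Finset α).erase x = {z, y} := by
    ext u
    simp only [Finset.mem_erase, Finset.mem_insert, Finset.mem_singleton]
    constructor
    · rintro ⟨hne, rfl | rfl | rfl⟩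
      · exact absurd rfl hne
      · exact Or.inr rfl
      · exact Or.inl rfl
    · rintro (rfl | rfl)
      · exact ⟨hzx, Or.inr (Or.inr rfl)⟩
      · exact ⟨hyx, Or.inr (Or.inl rfl)⟩
  have hd1 : (pf2 ({x, y, z} : Finset α) (rk3 x z) (rk21 z)) ∈ Dom23 α := pf2_dom (Or.inr hcard3) _ _
  have hd2 : (pf2 ({x, y, z} : Finset α) (rk3 x z) (rk3 z x)) ∈ Dom23 α := pf2_dom (Or.inr hcard3) _ _
  have hd3 : (pf2 ({x, y, z} : Finset α) (rk3 x z) (rk3 y z)) ∈ Dom23 α := pf2_dom (Or.inr hcard3) _ _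
  have hd4 : (pf2 ({x, y, z} : Finset α) (rk21 z) (rk3 y z)) ∈ Dom23 α := pf2_dom (Or.inr hcard3) _ _
  have hd5 : (pf2 ({x, y, z} : Finset α) (rk3 z y) (rk3 y z)) ∈ Dom23 α := pf2_dom (Or.inr hcard3) _ _
  have hdm1 : (pf2 ({x, y, z} : Finset α) (rk3 x z) (rk21 z)).minus y ∈ Dom23 α :=
    restrict_dom (isSWO_pf2 _ _ _) ⟨0, by simp [pf2]⟩ (Finset.erase_subset _ _)
      (Or.inl (by rw [show ((pf2 ({x, y, z} : Finset α) (rk3 x z) (rk21 z)).alts.erase y) = _ from her_y]; exact pair_card hxz))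
  have hdr1 : (pf2 ({x, y, z} : Finset α) (rk3 x z) (rk21 z)).restrict {x, y} ∈ Dom23 α :=
    restrict_dom (isSWO_pf2 _ _ _) ⟨0, by simp [pf2]⟩
      (by simp [pf2, Finset.insert_subset_iff]) (Or.inl (pair_card hxy))
  have hdm2 : (pf2 ({x, y, z} : Finset α) (rk3 x z) (rk3 z x)).minus y ∈ Dom23 α :=
    restrict_dom (isSWO_pf2 _ _ _) ⟨0, by simp [pf2]⟩ (Finset.erase_subset _ _)
      (Or.inl (by rw [show ((pf2 ({x, y, z} : Finset α) (rk3 x z) (rk3 z x)).alts.erase y) = _ from her_y]; exact pair_card hxz))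
  have hdr2 : (pf2 ({x, y, z} : Finset α) (rk3 x z) (rk3 z x)).restrict {z, y} ∈ Dom23 α :=
    restrict_dom (isSWO_pf2 _ _ _) ⟨0, by simp [pf2]⟩
      (by simp [pf2, Finset.insert_subset_iff]) (Or.inl (pair_card hzy))
  have hdm4 : (pf2 ({x, y, z} : Finset α) (rk21 z) (rk3 y z)).minus x ∈ Dom23 α :=
    restrict_dom (isSWO_pf2 _ _ _) ⟨0, by simp [pf2]⟩ (Finset.erase_subset _ _)
      (Or.inl (by rw [show ((pf2 ({x, y, z} : Finset α) (rk21 z) (rk3 y z)).alts.erase x) = _ from her_x]; exact pair_card hzy))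
  have hdr4 : (pf2 ({x, y, z} : Finset α) (rk21 z) (rk3 y z)).restrict {y, x} ∈ Dom23 α :=
    restrict_dom (isSWO_pf2 _ _ _) ⟨0, by simp [pf2]⟩
      (by simp [pf2, Finset.insert_subset_iff]) (Or.inl (pair_card hyx))
  have hdm5 : (pf2 ({x, y, z} : Finset α) (rk3 z y) (rk3 y z)).minus x ∈ Dom23 α :=
    restrict_dom (isSWO_pf2 _ _ _) ⟨0, by simp [pf2]⟩ (Finset.erase_subset _ _)
      (Or.inl (by rw [show ((pf2 ({x, y, z} : Finset α) (rk3 z y) (rk3 y z)).alts.erase x) = _ from her_x]; exact pair_card hzy))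
  have hdr5 : (pf2 ({x, y, z} : Finset α) (rk3 z y) (rk3 y z)).restrict {z, x} ∈ Dom23 α :=
    restrict_dom (isSWO_pf2 _ _ _) ⟨0, by simp [pf2]⟩
      (by simp [pf2, Finset.insert_subset_iff]) (Or.inl (pair_card hzx))
  have hm1 : F ((pf2 ({x, y, z} : Finset α) (rk3 x z) (rk21 z)).minus y) = ({x, z} : Finset α) := by
    have he := F_ext hA hdm1 (pf2_dom (Or.inl (pair_card hxz)) (rk21 x) (rk21 z))
      (by simpa [Profile.minus, Profile.restrict, pf2] using her_y) rfl (by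
        intro i hi a ha b hb
        simp only [Profile.minus, Profile.restrict, pf2, Finset.mem_erase, Finset.mem_insert,
          Finset.mem_singleton] at hi ha hb
        obtain ⟨ha', ha⟩ := ha
        obtain ⟨hb', hb⟩ := hb
        rcases hi with rfl | rfl <;> rcases ha with rfl | rfl | rfl <;>
            rcases hb with rfl | rfl | rfl <;>
          first
            | exact absurd rfl ha'
            | exact absurd rfl hb'
            | simp [pf2, Profile.minus, Profile.restrict, rk3, rk21, rk0, Finset.mem_erase, Finset.mem_insert, Finset.mem_singleton, hxy, hxz, hyz, hyx, hzx, hzy])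
    rw [he]
    exact F_Bp hNE hA hN hxz
  have hr1 : F ((pf2 ({x, y, z} : Finset α) (rk3 x z) (rk21 z)).restrict {x, y}) = ({x} : Finset α) := by
    have he := F_ext hA hdr1 (pf2_dom (Or.inl (pair_card hxy)) (rk21 x) (rk0)) rfl rfl (by
        intro i hi a ha b hb
        simp only [Profile.minus, Profile.restrict, pf2, Finset.mem_insert,
          Finset.mem_singleton] at hi ha hb
        rcases hi with rfl | rfl <;> rcases ha with rfl | rfl <;> rcases hb with rfl | rfl <;>
          simp [pf2, Profile.minus, Profile.restrict, rk3, rk21, rk0, Finset.mem_erase, Finset.mem_insert, Finset.mem_singleton, hxy, hxz, hyz, hyx, hzx, hzy])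
    rw [he]
    exact F_C1 hNE hN hPR hxy
  have hm2 : F ((pf2 ({x, y, z} : Finset α) (rk3 x z) (rk3 z x)).minus y) = ({x, z} : Finset α) := by
    have he := F_ext hA hdm2 (pf2_dom (Or.inl (pair_card hxz)) (rk21 x) (rk21 z))
      (by simpa [Profile.minus, Profile.restrict, pf2] using her_y) rfl (by
        intro i hi a ha b hb
        simp only [Profile.minus, Profile.restrict, pf2, Finset.mem_erase, Finset.mem_insert,
          Finset.mem_singleton] at hi ha hb
        obtain ⟨ha', ha⟩ := ha
        obtain ⟨hb', hb⟩ := hb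
        rcases hi with rfl | rfl <;> rcases ha with rfl | rfl | rfl <;>
            rcases hb with rfl | rfl | rfl <;>
          first
            | exact absurd rfl ha'
            | exact absurd rfl hb'
            | simp [pf2, Profile.minus, Profile.restrict, rk3, rk21, rk0, Finset.mem_erase, Finset.mem_insert, Finset.mem_singleton, hxy, hxz, hyz, hyx, hzx, hzy])
    rw [he]
    exact F_Bp hNE hA hN hxz
  have hr2 : F ((pf2 ({x, y, z} : Finset α) (rk3 x z) (rk3 z x)).restrict {z, y}) = ({z} : Finset α) := by
    have he := F_ext hA hdr2 (pf2_dom (Or.inl (pair_card hzy)) (rk21 z) (rk21 z)) rfl rfl (by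
        intro i hi a ha b hb
        simp only [Profile.minus, Profile.restrict, pf2, Finset.mem_insert,
          Finset.mem_singleton] at hi ha hb
        rcases hi with rfl | rfl <;> rcases ha with rfl | rfl <;> rcases hb with rfl | rfl <;>
          simp [pf2, Profile.minus, Profile.restrict, rk3, rk21, rk0, Finset.mem_erase, Finset.mem_insert, Finset.mem_singleton, hxy, hxz, hyz, hyx, hzx, hzy])
    rw [he]
    exact F_C2 hNE hN hPR hzy
  have hm4 : F ((pf2 ({x, y, z} : Finset α) (rk21 z) (rk3 y z)).minus x) = ({z, y} : Finset α) := by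
    have he := F_ext hA hdm4 (pf2_dom (Or.inl (pair_card hzy)) (rk21 z) (rk21 y))
      (by simpa [Profile.minus, Profile.restrict, pf2] using her_x) rfl (by
        intro i hi a ha b hb
        simp only [Profile.minus, Profile.restrict, pf2, Finset.mem_erase, Finset.mem_insert,
          Finset.mem_singleton] at hi ha hb
        obtain ⟨ha', ha⟩ := ha
        obtain ⟨hb', hb⟩ := hb
        rcases hi with rfl | rfl <;> rcases ha with rfl | rfl | rfl <;>
            rcases hb with rfl | rfl | rfl <;>
          first
            | exact absurd rfl ha'
            | exact absurd rfl hb'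
            | simp [pf2, Profile.minus, Profile.restrict, rk3, rk21, rk0, Finset.mem_erase, Finset.mem_insert, Finset.mem_singleton, hxy, hxz, hyz, hyx, hzx, hzy])
    rw [he]
    exact F_Bp hNE hA hN hzy
  have hr4 : F ((pf2 ({x, y, z} : Finset α) (rk21 z) (rk3 y z)).restrict {y, x}) = ({y} : Finset α) := by
    have he := F_ext hA hdr4 (pf2_dom (Or.inl (pair_card hyx)) (rk0) (rk21 y)) rfl rfl (by
        intro i hi a ha b hb
        simp only [Profile.minus, Profile.restrict, pf2, Finset.mem_insert,
          Finset.mem_singleton] at hi ha hb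
        rcases hi with rfl | rfl <;> rcases ha with rfl | rfl <;> rcases hb with rfl | rfl <;>
          simp [pf2, Profile.minus, Profile.restrict, rk3, rk21, rk0, Finset.mem_erase, Finset.mem_insert, Finset.mem_singleton, hxy, hxz, hyz, hyx, hzx, hzy])
    rw [he]
    exact F_E1 hNE hN hPR hyx
  have hm5 : F ((pf2 ({x, y, z} : Finset α) (rk3 z y) (rk3 y z)).minus x) = ({z, y} : Finset α) := by
    have he := F_ext hA hdm5 (pf2_dom (Or.inl (pair_card hzy)) (rk21 z) (rk21 y))
      (by simpa [Profile.minus, Profile.restrict, pf2] using her_x) rfl (by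
        intro i hi a ha b hb
        simp only [Profile.minus, Profile.restrict, pf2, Finset.mem_erase, Finset.mem_insert,
          Finset.mem_singleton] at hi ha hb
        obtain ⟨ha', ha⟩ := ha
        obtain ⟨hb', hb⟩ := hb
        rcases hi with rfl | rfl <;> rcases ha with rfl | rfl | rfl <;>
            rcases hb with rfl | rfl | rfl <;>
          first
            | exact absurd rfl ha'
            | exact absurd rfl hb'
            | simp [pf2, Profile.minus, Profile.restrict, rk3, rk21, rk0, Finset.mem_erase, Finset.mem_insert, Finset.mem_singleton, hxy, hxz, hyz, hyx, hzx, hzy])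
    rw [he]
    exact F_Bp hNE hA hN hzy
  have hr5 : F ((pf2 ({x, y, z} : Finset α) (rk3 z y) (rk3 y z)).restrict {z, x}) = ({z} : Finset α) := by
    have he := F_ext hA hdr5 (pf2_dom (Or.inl (pair_card hzx)) (rk21 z) (rk21 z)) rfl rfl (by
        intro i hi a ha b hb
        simp only [Profile.minus, Profile.restrict, pf2, Finset.mem_insert,
          Finset.mem_singleton] at hi ha hb
        rcases hi with rfl | rfl <;> rcases ha with rfl | rfl <;> rcases hb with rfl | rfl <;>
          simp [pf2, Profile.minus, Profile.restrict, rk3, rk21, rk0, Finset.mem_erase, Finset.mem_insert, Finset.mem_singleton, hxy, hxz, hyz, hyx, hzx, hzy])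
    rw [he]
    exact F_C2 hNE hN hPR hzx
  have himp12 : ImproveFor (pf2 ({x, y, z} : Finset α) (rk3 x z) (rk21 z)) (pf2 ({x, y, z} : Finset α) (rk3 x z) (rk3 z x)) x := by
    refine ⟨rfl, rfl, 1, by simp [pf2], ⟨y, by simp [pf2], hyx,
      Or.inl ⟨by simp [pf2, Profile.minus, Profile.restrict, rk3, rk21, rk0, Finset.mem_erase, Finset.mem_insert, Finset.mem_singleton, hxy, hxz, hyz, hyx, hzx, hzy], by simp [pf2, Profile.minus, Profile.restrict, rk3, rk21, rk0, Finset.mem_erase, Finset.mem_insert, Finset.mem_singleton, hxy, hxz, hyz, hyx, hzx, hzy]⟩⟩, ?_, ?_, ?_⟩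
    · intro c hc hca
      simp only [pf2, Finset.mem_insert, Finset.mem_singleton] at hc
      rcases hc with rfl | rfl | rfl <;>
        first
          | exact absurd rfl hca
          | simp [pf2, Profile.minus, Profile.restrict, rk3, rk21, rk0, Finset.mem_erase, Finset.mem_insert, Finset.mem_singleton, hxy, hxz, hyz, hyx, hzx, hzy]
    · intro c hc hca d hd hda
      simp only [pf2, Finset.mem_insert, Finset.mem_singleton] at hc hd
      rcases hc with rfl | rfl | rfl <;> rcases hd with rfl | rfl | rfl <;>
        first
          | exact absurd rfl hca
          | exact absurd rfl hda
          | simp [pf2, Profile.minus, Profile.restrict, rk3, rk21, rk0, Finset.mem_erase, Finset.mem_insert, Finset.mem_singleton, hxy, hxz, hyz, hyx, hzx, hzy]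
    · intro j hj hji u _ v _
      simp only [pf2, Finset.mem_insert, Finset.mem_singleton] at hj
      rcases hj with rfl | rfl <;>
        first
          | exact absurd rfl hji
          | simp [pf2]
  have himp13 : ImproveFor (pf2 ({x, y, z} : Finset α) (rk3 x z) (rk21 z)) (pf2 ({x, y, z} : Finset α) (rk3 x z) (rk3 y z)) y := by
    refine ⟨rfl, rfl, 1, by simp [pf2], ⟨z, by simp [pf2], hzy,
      Or.inl ⟨by simp [pf2, Profile.minus, Profile.restrict, rk3, rk21, rk0, Finset.mem_erase, Finset.mem_insert, Finset.mem_singleton, hxy, hxz, hyz, hyx, hzx, hzy], by simp [pf2, Profile.minus, Profile.restrict, rk3, rk21, rk0, Finset.mem_erase, Finset.mem_insert, Finset.mem_singleton, hxy, hxz, hyz, hyx, hzx, hzy]⟩⟩, ?_, ?_, ?_⟩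
    · intro c hc hca
      simp only [pf2, Finset.mem_insert, Finset.mem_singleton] at hc
      rcases hc with rfl | rfl | rfl <;>
        first
          | exact absurd rfl hca
          | simp [pf2, Profile.minus, Profile.restrict, rk3, rk21, rk0, Finset.mem_erase, Finset.mem_insert, Finset.mem_singleton, hxy, hxz, hyz, hyx, hzx, hzy]
    · intro c hc hca d hd hda
      simp only [pf2, Finset.mem_insert, Finset.mem_singleton] at hc hd
      rcases hc with rfl | rfl | rfl <;> rcases hd with rfl | rfl | rfl <;>
        first
          | exact absurd rfl hca
          | exact absurd rfl hda
          | simp [pf2, Profile.minus, Profile.restrict, rk3, rk21, rk0, Finset.mem_erase, Finset.mem_insert, Finset.mem_singleton, hxy, hxz, hyz, hyx, hzx, hzy]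
    · intro j hj hji u _ v _
      simp only [pf2, Finset.mem_insert, Finset.mem_singleton] at hj
      rcases hj with rfl | rfl <;>
        first
          | exact absurd rfl hji
          | simp [pf2]
  have himp43 : ImproveFor (pf2 ({x, y, z} : Finset α) (rk21 z) (rk3 y z)) (pf2 ({x, y, z} : Finset α) (rk3 x z) (rk3 y z)) x := by
    refine ⟨rfl, rfl, 0, by simp [pf2], ⟨z, by simp [pf2], hzx,
      Or.inl ⟨by simp [pf2, Profile.minus, Profile.restrict, rk3, rk21, rk0, Finset.mem_erase, Finset.mem_insert, Finset.mem_singleton, hxy, hxz, hyz, hyx, hzx, hzy], by simp [pf2, Profile.minus, Profile.restrict, rk3, rk21, rk0, Finset.mem_erase, Finset.mem_insert, Finset.mem_singleton, hxy, hxz, hyz, hyx, hzx, hzy]⟩⟩, ?_, ?_, ?_⟩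
    · intro c hc hca
      simp only [pf2, Finset.mem_insert, Finset.mem_singleton] at hc
      rcases hc with rfl | rfl | rfl <;>
        first
          | exact absurd rfl hca
          | simp [pf2, Profile.minus, Profile.restrict, rk3, rk21, rk0, Finset.mem_erase, Finset.mem_insert, Finset.mem_singleton, hxy, hxz, hyz, hyx, hzx, hzy]
    · intro c hc hca d hd hda
      simp only [pf2, Finset.mem_insert, Finset.mem_singleton] at hc hd
      rcases hc with rfl | rfl | rfl <;> rcases hd with rfl | rfl | rfl <;>
        first
          | exact absurd rfl hca
          | exact absurd rfl hda
          | simp [pf2, Profile.minus, Profile.restrict, rk3, rk21, rk0, Finset.mem_erase, Finset.mem_insert, Finset.mem_singleton, hxy, hxz, hyz, hyx, hzx, hzy]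
    · intro j hj hji u _ v _
      simp only [pf2, Finset.mem_insert, Finset.mem_singleton] at hj
      rcases hj with rfl | rfl <;>
        first
          | exact absurd rfl hji
          | simp [pf2]
  have himp45 : ImproveFor (pf2 ({x, y, z} : Finset α) (rk21 z) (rk3 y z)) (pf2 ({x, y, z} : Finset α) (rk3 z y) (rk3 y z)) y := by
    refine ⟨rfl, rfl, 0, by simp [pf2], ⟨x, by simp [pf2], hxy,
      Or.inl ⟨by simp [pf2, Profile.minus, Profile.restrict, rk3, rk21, rk0, Finset.mem_erase, Finset.mem_insert, Finset.mem_singleton, hxy, hxz, hyz, hyx, hzx, hzy], by simp [pf2, Profile.minus, Profile.restrict, rk3, rk21, rk0, Finset.mem_erase, Finset.mem_insert, Finset.mem_singleton, hxy, hxz, hyz, hyx, hzx, hzy]⟩⟩, ?_, ?_, ?_⟩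
    · intro c hc hca
      simp only [pf2, Finset.mem_insert, Finset.mem_singleton] at hc
      rcases hc with rfl | rfl | rfl <;>
        first
          | exact absurd rfl hca
          | simp [pf2, Profile.minus, Profile.restrict, rk3, rk21, rk0, Finset.mem_erase, Finset.mem_insert, Finset.mem_singleton, hxy, hxz, hyz, hyx, hzx, hzy]
    · intro c hc hca d hd hda
      simp only [pf2, Finset.mem_insert, Finset.mem_singleton] at hc hd
      rcases hc with rfl | rfl | rfl <;> rcases hd with rfl | rfl | rfl <;>
        first
          | exact absurd rfl hca
          | exact absurd rfl hda
          | simp [pf2, Profile.minus, Profile.restrict, rk3, rk21, rk0, Finset.mem_erase, Finset.mem_insert, Finset.mem_singleton, hxy, hxz, hyz, hyx, hzx, hzy]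
    · intro j hj hji u _ v _
      simp only [pf2, Finset.mem_insert, Finset.mem_singleton] at hj
      rcases hj with rfl | rfl <;>
        first
          | exact absurd rfl hji
          | simp [pf2]
  by_cases hy1 : y ∈ F (pf2 ({x, y, z} : Finset α) (rk3 x z) (rk21 z))
  · have hF3 : F (pf2 ({x, y, z} : Finset α) (rk3 x z) (rk3 y z)) = {y} := hPR _ hd1 _ hd3 y hy1 himp13
    have hx4 : x ∉ F (pf2 ({x, y, z} : Finset α) (rk21 z) (rk3 y z)) := by
      intro hx
      have h := hPR _ hd4 _ hd3 x hx himp43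
      rw [h] at hF3
      exact hxy (by simpa using hF3)
    have hy4 : y ∈ F (pf2 ({x, y, z} : Finset α) (rk21 z) (rk3 y z)) :=
      hItS _ hd4 y (by simp [pf2]) x (by simp [pf2]) hdm4 hdr4 (by rw [hm4]; simp) hr4 hx4
    have hF5 : F (pf2 ({x, y, z} : Finset α) (rk3 z y) (rk3 y z)) = {y} := hPR _ hd4 _ hd5 y hy4 himp45
    have hz5 : z ∈ F (pf2 ({x, y, z} : Finset α) (rk3 z y) (rk3 y z)) :=
      hItS _ hd5 z (by simp [pf2]) x (by simp [pf2]) hdm5 hdr5 (by rw [hm5]; simp) hr5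
        (by rw [hF5]; simp [hxy])
    rw [hF5] at hz5
    exact hyz ((by simpa using hz5 : z = y)).symm
  · have hx1 : x ∈ F (pf2 ({x, y, z} : Finset α) (rk3 x z) (rk21 z)) :=
      hItS _ hd1 x (by simp [pf2]) y (by simp [pf2]) hdm1 hdr1 (by rw [hm1]; simp) hr1 hy1
    have hF2 : F (pf2 ({x, y, z} : Finset α) (rk3 x z) (rk3 z x)) = {x} := hPR _ hd1 _ hd2 x hx1 himp12
    have hz2 : z ∈ F (pf2 ({x, y, z} : Finset α) (rk3 x z) (rk3 z x)) :=
      hItS _ hd2 z (by simp [pf2]) y (by simp [pf2]) hdm2 hdr2 (by rw [hm2]; simp) hr2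
        (by rw [hF2]; simp [hyx])
    rw [hF2] at hz2
    exact hxz ((by simpa using hz2 : z = x)).symm


end MayMinimax
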